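/- Let ω̃_{ij} for distinct i, j ∈ {1,2,3,4} be strictly positive real numbers with ω̃_{ij} = ω̃_{ji} and ω̃_{13} ≥ ω̃_{24}. Put y₃ = ω̃_{24}/(2ω̃_{13} − ω̃_{24}) and p₁ = (0,0), p₂ = (1,0), p₃ = (2, y₃), p₄ = (0,1) in ℝ². Then 0 < y₃ ≤ 1 (so p₁, p₂, p₃, p₄ are in convex position in this cyclic order), and with the boundary stresses ω_{12} = −2ω̃_{13} − ω̃_{12}, ω_{23} = ω̃_{24} − 2ω̃_{13} − ω̃_{23}, ω_{34} = −ω̃_{24}/2 − ω̃_{34}, ω_{14} = ω̃_{24}ω̃_{13}/(ω̃_{24} − 2ω̃_{13}) − ω̃_{14}, every vertex is in equilibrium: for each i ∈ {1,2,3,4}, Σ_{j ≠ i} ω̃_{ij}(p_i − p_j) + Σ_{j adjacent to i in the 4-cycle 1-2-3-4} ω_{ij}(p_i − p_j) = (0,0). -/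

import Mathlib

open BigOperators

/-- **Case 2 (quadrilateral outer face).** Given symmetric positive substitution stresses
`w i j` on the pairs of `{1,2,3,4}` (indexed here by `Fin 4` as `0,1,2,3`) with
`ω̃₁₃ ≥ ω̃₂₄`, the placement `p₁=(0,0), p₂=(1,0), p₃=(2,y₃), p₄=(0,1)` with
`y₃ = ω̃₂₄/(2ω̃₁₃ - ω̃₂₄)` satisfies `0 < y₃ ≤ 1`, and with the explicit boundary
stresses on the 4-cycle every vertex is in equilibrium. -/
theorem quadrilateral_boundary_equilibrium
    (w : Fin 4 → Fin 4 → ℝ)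
    (hpos : ∀ i j, i ≠ j → 0 < w i j)
    (hsym : ∀ i j, w i j = w j i)
    (h : w 1 3 ≤ w 0 2) :
    let y3 : ℝ := w 1 3 / (2 * w 0 2 - w 1 3)
    let p : Fin 4 → ℝ × ℝ := ![(0, 0), (1, 0), (2, y3), (0, 1)]
    -- boundary stresses on the cycle edges 12, 23, 34, 41:
    let ov : Fin 4 → ℝ :=
      ![-2 * w 0 2 - w 0 1,
        w 1 3 - 2 * w 0 2 - w 1 2,
        -(w 1 3) / 2 - w 2 3,
        w 1 3 * w 0 2 / (w 1 3 - 2 * w 0 2) - w 0 3]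
    (0 < y3 ∧ y3 ≤ 1) ∧
      ∀ i : Fin 4,
        (∑ j ∈ Finset.univ.filter (fun j => j ≠ i), w i j • (p i - p j))
            + ov i • (p i - p (i + 1)) + ov (i - 1) • (p i - p (i - 1)) = 0 := by
  intro y3 p ov
  have h13 : 0 < w 1 3 := hpos 1 3 (by decide)
  have h02 : 0 < w 0 2 := hpos 0 2 (by decide)
  have hd : 0 < 2 * w 0 2 - w 1 3 := by linarith
  have hdne : (2 * w 0 2 - w 1 3) ≠ 0 := ne_of_gt hd
  have hdne' : (w 1 3 - 2 * w 0 2) ≠ 0 := by intro hh; apply hdne; linarith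
  have hn1 : w 0 2 * 2 - w 1 3 ≠ 0 := by intro hh; apply hdne; linarith
  have hn2 : -(w 0 2 * 2) + w 1 3 ≠ 0 := by intro hh; apply hdne; linarith
  have hn3 : -w 1 3 + w 0 2 * 2 ≠ 0 := by intro hh; apply hdne; linarith
  refine ⟨⟨div_pos h13 hd, by rw [div_le_one hd]; linarith⟩, ?_⟩
  intro i
  fin_cases i <;>
    simp [p, ov, y3, Fin.sum_univ_four, Finset.sum_filter, Prod.ext_iff,
      hsym 1 0, hsym 2 0, hsym 2 1, hsym 3 0, hsym 3 1, hsym 3 2,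
      show (-1 : Fin 4) = 3 by decide] <;>
    constructor <;> (try field_simp) <;> (try ring_nf) <;> (try field_simp) <;> ring
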